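/- With the setup of the weakly self-avoiding walk kernel, for fixed g > 0 the map ν ↦ ‖Q(g,ν)‖ on ℝ is convex. -/

import Mathlib

open MeasureTheory
open scoped Nat RealInnerProductSpace

noncomputable def besselI0 (z : ℝ) : ℝ :=
  ∑' m : ℕ, (z / 2) ^ (2 * m) / (m ! * m !)

/-- The kernel k₀(t,s; g, ν) of the weakly self-avoiding walk transfer operator. -/
noncomputable def kernelK0 (phi : ℝ → ℝ) (g nu t s : ℝ) : ℝ :=
  Real.exp (-(g * phi t + nu * t) / 2) * Real.exp (-(g * phi s + nu * s) / 2) *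
    Real.exp (-t) * Real.exp (-s) * besselI0 (2 * Real.sqrt (s * t))

namespace SAW

/-- The entire function `J x = ∑ x^m / (m!)^2`, so that `I₀(2√x) = J x` for `x ≥ 0`. -/
noncomputable def J (x : ℝ) : ℝ := ∑' m : ℕ, x ^ m / ((m ! : ℝ) * m !)

lemma summable_J (x : ℝ) : Summable (fun m : ℕ => x ^ m / ((m ! : ℝ) * m !)) := by
  refine Summable.of_norm_bounded (Real.summable_pow_div_factorial |x|) (fun m => ?_)
  have h1 : (1 : ℝ) ≤ (m ! : ℝ) := by exact_mod_cast Nat.one_le_iff_ne_zero.mpr (Nat.factorial_ne_zero m)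
  have h0 : (0 : ℝ) < (m ! : ℝ) := lt_of_lt_of_le one_pos h1
  have : ‖x ^ m / ((m ! : ℝ) * m !)‖ = |x| ^ m / ((m ! : ℝ) * m !) := by
    rw [Real.norm_eq_abs, abs_div, abs_pow, abs_of_nonneg (mul_nonneg h0.le h0.le)]
  rw [this]
  apply div_le_div_of_nonneg_left (by positivity) h0
  nlinarith

lemma J_nonneg {x : ℝ} (hx : 0 ≤ x) : 0 ≤ J x :=
  tsum_nonneg (fun m => by positivity)

lemma measurable_J : Measurable J := by
  have h : ∀ x : ℝ, Filter.Tendsto (fun n => ∑ m ∈ Finset.range n, x ^ m / ((m ! : ℝ) * m !))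
      Filter.atTop (nhds (J x)) := fun x => (summable_J x).hasSum.tendsto_sum_nat
  exact measurable_of_tendsto_metrizable
    (fun n => Finset.measurable_sum _ (fun m _ => (measurable_id.pow_const m).div_const _))
    (tendsto_pi_nhds.mpr h)

lemma exp_eq_tsum (y : ℝ) : Real.exp y = ∑' n : ℕ, y ^ n / n ! := by
  rw [Real.exp_eq_exp_ℝ, NormedSpace.exp_eq_tsum_div]

lemma J_le {s t : ℝ} (hs : 0 ≤ s) (ht : 0 ≤ t) : J (s * t) ≤ Real.exp s * Real.exp t := by
  have hterm : ∀ m : ℕ, (s * t) ^ m / ((m ! : ℝ) * m !) ≤ s ^ m / m ! * Real.exp t := by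
    intro m
    have h0 : (0 : ℝ) < (m ! : ℝ) := by positivity
    have h1 : (s * t) ^ m / ((m ! : ℝ) * m !) = s ^ m / m ! * (t ^ m / m !) := by
      rw [mul_pow, div_mul_div_comm]
    rw [h1]
    refine mul_le_mul_of_nonneg_left ?_ (by positivity)
    rw [exp_eq_tsum t]
    exact Summable.le_tsum (Real.summable_pow_div_factorial t) m (fun n _ => by positivity)
  calc J (s * t) ≤ ∑' m : ℕ, s ^ m / m ! * Real.exp t :=
        Summable.tsum_le_tsum hterm (summable_J _) ((Real.summable_pow_div_factorial s).mul_right _)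
    _ = Real.exp s * Real.exp t := by rw [tsum_mul_right, ← exp_eq_tsum s]

end SAW

namespace SAW

lemma besselI0_eq_J (z : ℝ) : besselI0 z = J (z ^ 2 / 4) := by
  unfold besselI0 J
  congr 1; funext m
  congr 1
  rw [pow_mul]
  congr 1
  rw [div_pow]
  norm_num

lemma besselI0_sqrt {x : ℝ} (hx : 0 ≤ x) : besselI0 (2 * Real.sqrt x) = J x := by
  rw [besselI0_eq_J]
  congr 1
  rw [mul_pow, Real.sq_sqrt hx]
  ring

/-- A self-adjoint operator whose quadratic form is bounded by `C` on the unit ball has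
operator norm at most `C`. -/
lemma opNorm_le_of_inner {E : Type*} [NormedAddCommGroup E] [InnerProductSpace ℝ E]
    [CompleteSpace E] (T : E →L[ℝ] E) (hT : IsSelfAdjoint T) {C : ℝ} (hC : 0 ≤ C)
    (h : ∀ x : E, ‖x‖ ≤ 1 → |⟪T x, x⟫| ≤ C) : ‖T‖ ≤ C := by
  have hsym : ∀ u v : E, ⟪T u, v⟫ = ⟪T v, u⟫ := by
    intro u v
    exact (hT.isSymmetric u v).trans (real_inner_comm u (T v)).symm
  have hq : ∀ x : E, |⟪T x, x⟫| ≤ C * ‖x‖ ^ 2 := by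
    intro x
    rcases eq_or_ne x 0 with rfl | hx
    · simp
    · have hnx : 0 < ‖x‖ := norm_pos_iff.mpr hx
      set c : ℝ := ‖x‖⁻¹ with hc
      have hcx : ‖c • x‖ ≤ 1 := by
        rw [norm_smul, Real.norm_eq_abs, abs_of_pos (by positivity), hc,
          inv_mul_cancel₀ hnx.ne']
      have he : ⟪T (c • x), c • x⟫ = c ^ 2 * ⟪T x, x⟫ := by
        rw [T.map_smul, real_inner_smul_left, real_inner_smul_right]; ring
      have h1 := h (c • x) hcx
      rw [he, abs_mul, abs_of_nonneg (sq_nonneg c)] at h1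
      have hc2 : c ^ 2 * ‖x‖ ^ 2 = 1 := by
        rw [hc]; field_simp
      nlinarith [mul_le_mul_of_nonneg_left h1 (sq_nonneg ‖x‖), abs_nonneg ⟪T x, x⟫]
  have hbil : ∀ x y : E, ⟪T x, y⟫ ≤ (C / 2) * (‖x‖ ^ 2 + ‖y‖ ^ 2) := by
    intro x y
    have h1 := (abs_le.mp (hq (x + y))).2
    have h2 := (abs_le.mp (hq (x - y))).1
    have he : ⟪T (x + y), x + y⟫ - ⟪T (x - y), x - y⟫ = 4 * ⟪T x, y⟫ := by
      rw [map_add, map_sub, inner_add_left, inner_add_right, inner_add_right,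
        inner_sub_left, inner_sub_right, inner_sub_right]
      have := hsym y x
      ring_nf
      linarith [hsym y x]
    have hpar := parallelogram_law_with_norm ℝ x y
    nlinarith [h1, h2, he, hpar, sq_nonneg (‖x‖ - ‖y‖)]
  refine T.opNorm_le_bound hC fun x => ?_
  rcases eq_or_ne (T x) 0 with h0 | h0
  · rw [h0, norm_zero]
    positivity
  · have hTx : 0 < ‖T x‖ := norm_pos_iff.mpr h0
    have hx : 0 < ‖x‖ := by
      rcases eq_or_ne x 0 with rfl | hx
      · exact absurd (map_zero T) h0
      · exact norm_pos_iff.mpr hx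
    set y : E := (‖x‖ / ‖T x‖) • T x with hy
    have hyn : ‖y‖ = ‖x‖ := by
      rw [hy, norm_smul, Real.norm_eq_abs, abs_of_nonneg (by positivity)]
      field_simp
    have h3 := hbil x y
    have h4 : ⟪T x, y⟫ = ‖x‖ * ‖T x‖ := by
      rw [hy, real_inner_smul_right, real_inner_self_eq_norm_mul_norm]
      field_simp
    rw [h4, hyn] at h3
    have h5 : ‖x‖ * ‖T x‖ ≤ C * ‖x‖ ^ 2 := by nlinarith
    calc ‖T x‖ = (‖x‖ * ‖T x‖) / ‖x‖ := by field_simp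
      _ ≤ (C * ‖x‖ ^ 2) / ‖x‖ := by gcongr
      _ = C * ‖x‖ := by field_simp

end SAW

namespace SAW

lemma besselI0_nonneg (z : ℝ) : 0 ≤ besselI0 z := by
  rw [besselI0_eq_J]; exact J_nonneg (by positivity)

lemma kernelK0_nonneg (phi : ℝ → ℝ) (g nu t s : ℝ) : 0 ≤ kernelK0 phi g nu t s :=
  mul_nonneg (by positivity) (besselI0_nonneg _)

lemma kernelK0_le (phi : ℝ → ℝ) (g nu t s : ℝ) (ht : 0 ≤ t) (hs : 0 ≤ s) :
    kernelK0 phi g nu t s ≤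
      Real.exp (-(g * phi t + nu * t) / 2) * Real.exp (-(g * phi s + nu * s) / 2) := by
  unfold kernelK0
  rw [besselI0_sqrt (mul_nonneg hs ht)]
  have hone : Real.exp (-t) * Real.exp (-s) * (Real.exp s * Real.exp t) = 1 := by
    rw [← Real.exp_add, ← Real.exp_add, ← Real.exp_add,
      show -t + -s + (s + t) = 0 by ring, Real.exp_zero]
  calc Real.exp (-(g * phi t + nu * t) / 2) * Real.exp (-(g * phi s + nu * s) / 2) *
        Real.exp (-t) * Real.exp (-s) * J (s * t)
      ≤ Real.exp (-(g * phi t + nu * t) / 2) * Real.exp (-(g * phi s + nu * s) / 2) *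
        Real.exp (-t) * Real.exp (-s) * (Real.exp s * Real.exp t) := by
        gcongr
        exact J_le hs ht
    _ = Real.exp (-(g * phi t + nu * t) / 2) * Real.exp (-(g * phi s + nu * s) / 2) *
        (Real.exp (-t) * Real.exp (-s) * (Real.exp s * Real.exp t)) := by ring
    _ = _ := by rw [hone, mul_one]

lemma kernelK0_convex (phi : ℝ → ℝ) (g t s : ℝ) {a b ν₁ ν₂ : ℝ}
    (ha : 0 ≤ a) (hb : 0 ≤ b) (hab : a + b = 1) :
    kernelK0 phi g (a * ν₁ + b * ν₂) t s ≤
      a * kernelK0 phi g ν₁ t s + b * kernelK0 phi g ν₂ t s := by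
  obtain ⟨C, hC, hsplit⟩ : ∃ C : ℝ, 0 ≤ C ∧ ∀ ν : ℝ,
      kernelK0 phi g ν t s = Real.exp (-(ν * (t + s)) / 2) * C := by
    refine ⟨Real.exp (-(g * phi t) / 2) * Real.exp (-(g * phi s) / 2) * Real.exp (-t) *
      Real.exp (-s) * besselI0 (2 * Real.sqrt (s * t)),
      mul_nonneg (by positivity) (besselI0_nonneg _), fun ν => ?_⟩
    unfold kernelK0
    rw [show -(g * phi t + ν * t) / 2 = -(g * phi t) / 2 + -(ν * t) / 2 by ring, Real.exp_add,
      show -(g * phi s + ν * s) / 2 = -(g * phi s) / 2 + -(ν * s) / 2 by ring, Real.exp_add,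
      show -(ν * (t + s)) / 2 = -(ν * t) / 2 + -(ν * s) / 2 by ring, Real.exp_add]
    ring
  rw [hsplit, hsplit, hsplit]
  have hconv := convexOn_exp.2 (Set.mem_univ (-(ν₁ * (t + s)) / 2))
    (Set.mem_univ (-(ν₂ * (t + s)) / 2)) ha hb hab
  simp only [smul_eq_mul] at hconv
  calc Real.exp (-((a * ν₁ + b * ν₂) * (t + s)) / 2) * C
      = Real.exp (a * (-(ν₁ * (t + s)) / 2) + b * (-(ν₂ * (t + s)) / 2)) * C := by
        rw [show -((a * ν₁ + b * ν₂) * (t + s)) / 2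
          = a * (-(ν₁ * (t + s)) / 2) + b * (-(ν₂ * (t + s)) / 2) by ring]
    _ ≤ (a * Real.exp (-(ν₁ * (t + s)) / 2) + b * Real.exp (-(ν₂ * (t + s)) / 2)) * C :=
        mul_le_mul_of_nonneg_right hconv hC
    _ = a * (Real.exp (-(ν₁ * (t + s)) / 2) * C) + b * (Real.exp (-(ν₂ * (t + s)) / 2) * C) := by
        ring

end SAW


/-- For fixed `g > 0`, the map `ν ↦ ‖Q(g,ν)‖` is convex on ℝ. -/
theorem opNorm_Q_convex
    (phi : ℝ → ℝ) (hphi0 : phi 0 = 0)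
    (hphi_nonneg : ∀ t : ℝ, 0 ≤ t → 0 ≤ phi t)
    (hphi_mono : MonotoneOn (fun t => phi t / t) (Set.Ioi (0 : ℝ)))
    (hphi_super : Filter.Tendsto (fun t => phi t / t) Filter.atTop Filter.atTop)
    (g : ℝ) (hg : 0 < g)
    (Q : ℝ → (Lp ℝ 2 (volume.restrict (Set.Ici (0 : ℝ))) →L[ℝ]
      Lp ℝ 2 (volume.restrict (Set.Ici (0 : ℝ)))))
    (hQ_selfadj : ∀ nu : ℝ, IsSelfAdjoint (Q nu))
    (hQ_inner : ∀ (nu : ℝ) (f : Lp ℝ 2 (volume.restrict (Set.Ici (0 : ℝ)))),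
      ⟪Q nu f, f⟫ =
        ∫ t in Set.Ici (0 : ℝ), ∫ s in Set.Ici (0 : ℝ),
          f t * f s * kernelK0 phi g nu t s) :
    ConvexOn ℝ Set.univ (fun nu => ‖Q nu‖) := by
  classical
  have hres : volume.restrict (Set.Ici (0 : ℝ)) = volume.restrict (Set.Ioi (0 : ℝ)) :=
    (Measure.restrict_congr_set Ioi_ae_eq_Ici).symm
  have hae1 : ∀ᵐ t ∂(volume.restrict (Set.Ici (0 : ℝ))), t ∈ Set.Ici (0 : ℝ) :=
    ae_restrict_mem measurableSet_Ici
  -- φ is a.e. measurable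
  have hφmeas : AEMeasurable phi (volume.restrict (Set.Ici (0 : ℝ))) := by
    rw [hres]
    have h1 : AEMeasurable (fun t => phi t / t) (volume.restrict (Set.Ioi (0 : ℝ))) :=
      aemeasurable_restrict_of_monotoneOn measurableSet_Ioi hphi_mono
    refine (aemeasurable_id.mul h1).congr ?_
    filter_upwards [ae_restrict_mem measurableSet_Ioi] with t ht
    simp only [Pi.mul_apply, id_eq]
    rw [mul_comm, div_mul_cancel₀ _ (ne_of_gt (Set.mem_Ioi.mp ht))]
  set hfun : ℝ → ℝ → ℝ := fun ν t => Real.exp (-(g * phi t + ν * t) / 2) with hfun_def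
  have hfun_pos : ∀ ν t, 0 < hfun ν t := fun ν t => Real.exp_pos _
  have hfun_meas : ∀ ν, AEStronglyMeasurable (hfun ν) (volume.restrict (Set.Ici (0 : ℝ))) := by
    intro ν
    exact (Real.measurable_exp.comp_aemeasurable
      (((aemeasurable_const.mul hφmeas).add
        (aemeasurable_const.mul aemeasurable_id)).neg.div_const 2)).aestronglyMeasurable
  have hfun_mem : ∀ ν, MemLp (hfun ν) 2 (volume.restrict (Set.Ici (0 : ℝ))) := by
    intro ν
    rw [memLp_two_iff_integrable_sq (hfun_meas ν)]
    obtain ⟨T₀, hT₀⟩ :=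
      Filter.eventually_atTop.mp (hphi_super.eventually_ge_atTop ((1 + |ν|) / g))
    set T := max T₀ 1 with hT
    have hT1 : (1 : ℝ) ≤ T := le_max_right _ _
    have key : ∀ t ∈ Set.Ici (0 : ℝ),
        hfun ν t ^ 2 ≤ Real.exp ((1 + |ν|) * T) * Real.exp (-t) := by
      intro t ht
      have ht0 : (0 : ℝ) ≤ t := ht
      have h2 : hfun ν t ^ 2 = Real.exp (-(g * phi t + ν * t)) := by
        rw [hfun_def]
        rw [sq, ← Real.exp_add]
        congr 1; ring
      rw [h2, ← Real.exp_add, Real.exp_le_exp]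
      rcases le_or_gt T t with hTt | hTt
      · have htpos : (0 : ℝ) < t := lt_of_lt_of_le one_pos (le_trans hT1 hTt)
        have h3 : (1 + |ν|) / g ≤ phi t / t := hT₀ t (le_trans (le_max_left _ _) hTt)
        have h4 : (1 + |ν|) / g * t ≤ phi t := (le_div_iff₀ htpos).mp h3
        have h5 : (1 + |ν|) * t ≤ g * phi t := by
          have h51 := mul_le_mul_of_nonneg_left h4 hg.le
          calc (1 + |ν|) * t = g * ((1 + |ν|) / g * t) := by field_simp
            _ ≤ g * phi t := h51
        have h6 : -|ν| * t ≤ ν * t := mul_le_mul_of_nonneg_right (neg_abs_le ν) ht0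
        have h7 : (0 : ℝ) ≤ (1 + |ν|) * T := by positivity
        nlinarith
      · have h61 : -|ν| * t ≤ ν * t := mul_le_mul_of_nonneg_right (neg_abs_le ν) ht0
        have h62 : -|ν| * T ≤ -|ν| * t := by nlinarith [abs_nonneg ν, hTt.le]
        have h8 : 0 ≤ g * phi t := mul_nonneg hg.le (hphi_nonneg t ht0)
        nlinarith [abs_nonneg ν, hTt.le]
    have base : IntegrableOn (fun x : ℝ => Real.exp ((1 + |ν|) * T) * Real.exp (-x))
        (Set.Ioi (0 : ℝ)) volume := by
      have := (exp_neg_integrableOn_Ioi 0 (zero_lt_one)).const_mul (Real.exp ((1 + |ν|) * T))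
      simpa [IntegrableOn] using this
    have base' : Integrable (fun x : ℝ => Real.exp ((1 + |ν|) * T) * Real.exp (-x)) (volume.restrict (Set.Ici (0 : ℝ))) := by
      rw [hres]; exact base
    refine Integrable.mono base' ?_ ?_
    · exact ((hfun_meas ν).mul (hfun_meas ν)).congr
        (Filter.Eventually.of_forall fun t => (pow_two _).symm)
    · filter_upwards [hae1] with t ht
      rw [Real.norm_eq_abs, Real.norm_eq_abs, abs_of_nonneg (sq_nonneg _),
        abs_of_nonneg (by positivity)]
      exact key t ht
  -- products with f are integrable
  have hFf : ∀ (ν : ℝ) (f : Lp ℝ 2 (volume.restrict (Set.Ici (0 : ℝ)))), Integrable (fun t => f t * hfun ν t) (volume.restrict (Set.Ici (0 : ℝ))) := by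
    intro ν f
    have h1 : MemLp ((f : ℝ → ℝ) • hfun ν) 1 (volume.restrict (Set.Ici (0 : ℝ))) :=
      (hfun_mem ν).smul (Lp.memLp f)
    rw [← memLp_one_iff_integrable]
    exact h1
  have hae2 : ∀ᵐ p : ℝ × ℝ ∂((volume.restrict (Set.Ici (0 : ℝ))).prod (volume.restrict (Set.Ici (0 : ℝ)))), 0 ≤ p.1 ∧ 0 ≤ p.2 := by
    rw [Measure.prod_restrict]
    filter_upwards [ae_restrict_mem (measurableSet_Ici.prod measurableSet_Ici)] with p hp
    exact ⟨hp.1, hp.2⟩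
  have hmeas2 : ∀ (ν : ℝ) (f : Lp ℝ 2 (volume.restrict (Set.Ici (0 : ℝ)))), AEStronglyMeasurable
      (fun p : ℝ × ℝ => f p.1 * f p.2 * kernelK0 phi g ν p.1 p.2) ((volume.restrict (Set.Ici (0 : ℝ))).prod (volume.restrict (Set.Ici (0 : ℝ)))) := by
    intro ν f
    have hf1 : AEStronglyMeasurable (fun p : ℝ × ℝ => f p.1) ((volume.restrict (Set.Ici (0 : ℝ))).prod (volume.restrict (Set.Ici (0 : ℝ)))) :=
      (Lp.aestronglyMeasurable f).comp_quasiMeasurePreserving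
        Measure.quasiMeasurePreserving_fst
    have hf2 : AEStronglyMeasurable (fun p : ℝ × ℝ => f p.2) ((volume.restrict (Set.Ici (0 : ℝ))).prod (volume.restrict (Set.Ici (0 : ℝ)))) :=
      (Lp.aestronglyMeasurable f).comp_quasiMeasurePreserving
        Measure.quasiMeasurePreserving_snd
    have hφ1 : AEMeasurable (fun p : ℝ × ℝ => phi p.1) ((volume.restrict (Set.Ici (0 : ℝ))).prod (volume.restrict (Set.Ici (0 : ℝ)))) :=
      hφmeas.comp_quasiMeasurePreserving Measure.quasiMeasurePreserving_fst
    have hφ2 : AEMeasurable (fun p : ℝ × ℝ => phi p.2) ((volume.restrict (Set.Ici (0 : ℝ))).prod (volume.restrict (Set.Ici (0 : ℝ)))) :=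
      hφmeas.comp_quasiMeasurePreserving Measure.quasiMeasurePreserving_snd
    have he1 : AEMeasurable (fun p : ℝ × ℝ => Real.exp (-(g * phi p.1 + ν * p.1) / 2))
        ((volume.restrict (Set.Ici (0 : ℝ))).prod (volume.restrict (Set.Ici (0 : ℝ)))) :=
      Real.measurable_exp.comp_aemeasurable
        (((aemeasurable_const.mul hφ1).add
          (aemeasurable_const.mul measurable_fst.aemeasurable)).neg.div_const 2)
    have he2 : AEMeasurable (fun p : ℝ × ℝ => Real.exp (-(g * phi p.2 + ν * p.2) / 2))
        ((volume.restrict (Set.Ici (0 : ℝ))).prod (volume.restrict (Set.Ici (0 : ℝ)))) :=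
      Real.measurable_exp.comp_aemeasurable
        (((aemeasurable_const.mul hφ2).add
          (aemeasurable_const.mul measurable_snd.aemeasurable)).neg.div_const 2)
    have hm3 : Measurable (fun p : ℝ × ℝ => Real.exp (-p.1)) := measurable_fst.neg.exp
    have hm4 : Measurable (fun p : ℝ × ℝ => Real.exp (-p.2)) := measurable_snd.neg.exp
    have hbes : Measurable (fun p : ℝ × ℝ => besselI0 (2 * Real.sqrt (p.2 * p.1))) := by
      have heq : (fun p : ℝ × ℝ => besselI0 (2 * Real.sqrt (p.2 * p.1)))
          = fun p : ℝ × ℝ => SAW.J ((2 * Real.sqrt (p.2 * p.1)) ^ 2 / 4) := by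
        funext p; rw [SAW.besselI0_eq_J]
      rw [heq]
      exact SAW.measurable_J.comp
        (((((measurable_snd.mul measurable_fst).sqrt).const_mul 2).pow_const 2).div_const 4)
    have hker : AEStronglyMeasurable (fun p : ℝ × ℝ => kernelK0 phi g ν p.1 p.2) ((volume.restrict (Set.Ici (0 : ℝ))).prod (volume.restrict (Set.Ici (0 : ℝ)))) := by
      simp only [kernelK0]
      exact ((((he1.mul he2).mul hm3.aemeasurable).mul hm4.aemeasurable).mul
        hbes.aemeasurable).aestronglyMeasurable
    exact (hf1.mul hf2).mul hker
  have hint2 : ∀ (ν : ℝ) (f : Lp ℝ 2 (volume.restrict (Set.Ici (0 : ℝ)))), Integrable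
      (fun p : ℝ × ℝ => f p.1 * f p.2 * kernelK0 phi g ν p.1 p.2) ((volume.restrict (Set.Ici (0 : ℝ))).prod (volume.restrict (Set.Ici (0 : ℝ)))) := by
    intro ν f
    have hdom : Integrable
        (fun p : ℝ × ℝ => |f p.1 * hfun ν p.1| * |f p.2 * hfun ν p.2|) ((volume.restrict (Set.Ici (0 : ℝ))).prod (volume.restrict (Set.Ici (0 : ℝ)))) :=
      ((hFf ν f).abs).mul_prod ((hFf ν f).abs)
    refine Integrable.mono hdom (hmeas2 ν f) ?_
    filter_upwards [hae2] with p hp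
    have h1 : ‖f p.1 * f p.2 * kernelK0 phi g ν p.1 p.2‖
        = |f p.1| * |f p.2| * kernelK0 phi g ν p.1 p.2 := by
      rw [Real.norm_eq_abs, abs_mul, abs_mul,
        abs_of_nonneg (SAW.kernelK0_nonneg phi g ν p.1 p.2)]
    have h2 : ‖|f p.1 * hfun ν p.1| * |f p.2 * hfun ν p.2|‖
        = (|f p.1| * hfun ν p.1) * (|f p.2| * hfun ν p.2) := by
      rw [Real.norm_eq_abs, abs_mul, abs_abs, abs_abs, abs_mul, abs_mul,
        abs_of_pos (hfun_pos ν p.1), abs_of_pos (hfun_pos ν p.2)]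
    rw [h1, h2]
    calc |f p.1| * |f p.2| * kernelK0 phi g ν p.1 p.2
        ≤ |f p.1| * |f p.2| * (hfun ν p.1 * hfun ν p.2) := by
          refine mul_le_mul_of_nonneg_left ?_ (by positivity)
          have := SAW.kernelK0_le phi g ν p.1 p.2 hp.1 hp.2
          calc kernelK0 phi g ν p.1 p.2
              ≤ Real.exp (-(g * phi p.1 + ν * p.1) / 2)
                * Real.exp (-(g * phi p.2 + ν * p.2) / 2) := this
            _ = hfun ν p.1 * hfun ν p.2 := rfl
      _ = (|f p.1| * hfun ν p.1) * (|f p.2| * hfun ν p.2) := by ring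
  have hinner2 : ∀ (ν : ℝ) (f : Lp ℝ 2 (volume.restrict (Set.Ici (0 : ℝ)))), ⟪Q ν f, f⟫ =
      ∫ p : ℝ × ℝ, f p.1 * f p.2 * kernelK0 phi g ν p.1 p.2 ∂((volume.restrict (Set.Ici (0 : ℝ))).prod (volume.restrict (Set.Ici (0 : ℝ)))) := by
    intro ν f
    rw [hQ_inner ν f]
    exact integral_integral (hint2 ν f)
  have habs_eq : ∀ (ν : ℝ) (f : Lp ℝ 2 (volume.restrict (Set.Ici (0 : ℝ)))), ⟪Q ν |f|, |f|⟫ =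
      ∫ p : ℝ × ℝ, |f p.1| * |f p.2| * kernelK0 phi g ν p.1 p.2 ∂((volume.restrict (Set.Ici (0 : ℝ))).prod (volume.restrict (Set.Ici (0 : ℝ)))) := by
    intro ν f
    rw [hinner2 ν |f|]
    apply integral_congr_ae
    have h1 : (fun p : ℝ × ℝ => (|f| : Lp ℝ 2 (volume.restrict (Set.Ici (0 : ℝ)))) p.1) =ᵐ[(volume.restrict (Set.Ici (0 : ℝ))).prod (volume.restrict (Set.Ici (0 : ℝ)))] fun p => |f p.1| :=
      Measure.quasiMeasurePreserving_fst.ae_eq (Lp.coeFn_abs f)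
    have h2 : (fun p : ℝ × ℝ => (|f| : Lp ℝ 2 (volume.restrict (Set.Ici (0 : ℝ)))) p.2) =ᵐ[(volume.restrict (Set.Ici (0 : ℝ))).prod (volume.restrict (Set.Ici (0 : ℝ)))] fun p => |f p.2| :=
      Measure.quasiMeasurePreserving_snd.ae_eq (Lp.coeFn_abs f)
    filter_upwards [h1, h2] with p e1 e2
    rw [e1, e2]
  refine ⟨convex_univ, ?_⟩
  intro ν₁ _ ν₂ _ a b ha hb hab
  simp only [smul_eq_mul]
  set ν' := a * ν₁ + b * ν₂ with hν'
  have hC : 0 ≤ a * ‖Q ν₁‖ + b * ‖Q ν₂‖ := by positivity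
  refine le_trans (SAW.opNorm_le_of_inner (Q ν') (hQ_selfadj ν') hC ?_) le_rfl
  intro f hf
  have hintabs : ∀ ν : ℝ, Integrable
      (fun p : ℝ × ℝ => |f p.1| * |f p.2| * kernelK0 phi g ν p.1 p.2) ((volume.restrict (Set.Ici (0 : ℝ))).prod (volume.restrict (Set.Ici (0 : ℝ)))) := by
    intro ν
    refine ((hint2 ν f).abs).congr ?_
    filter_upwards [hae2] with p hp
    rw [abs_mul, abs_mul, abs_of_nonneg (SAW.kernelK0_nonneg phi g ν p.1 p.2)]
  have hkey : ∀ ν : ℝ, ⟪Q ν |f|, |f|⟫ ≤ ‖Q ν‖ := by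
    intro ν
    have h1 : ⟪Q ν |f|, |f|⟫ ≤ ‖Q ν |f|‖ * ‖(|f| : Lp ℝ 2 (volume.restrict (Set.Ici (0 : ℝ))))‖ := real_inner_le_norm _ _
    have h2 : ‖Q ν |f|‖ ≤ ‖Q ν‖ * ‖(|f| : Lp ℝ 2 (volume.restrict (Set.Ici (0 : ℝ))))‖ := (Q ν).le_opNorm _
    have h3 : ‖(|f| : Lp ℝ 2 (volume.restrict (Set.Ici (0 : ℝ))))‖ = ‖f‖ := norm_abs_eq_norm f
    rw [h3] at h1 h2
    nlinarith [norm_nonneg f, norm_nonneg (Q ν), norm_nonneg (Q ν |f|), hf]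
  calc |⟪Q ν' f, f⟫|
      ≤ ∫ p : ℝ × ℝ, |f p.1| * |f p.2| * kernelK0 phi g ν' p.1 p.2 ∂((volume.restrict (Set.Ici (0 : ℝ))).prod (volume.restrict (Set.Ici (0 : ℝ)))) := by
        rw [hinner2 ν' f, ← Real.norm_eq_abs]
        refine (norm_integral_le_integral_norm _).trans (le_of_eq ?_)
        apply integral_congr_ae
        filter_upwards [hae2] with p hp
        rw [Real.norm_eq_abs, abs_mul, abs_mul,
          abs_of_nonneg (SAW.kernelK0_nonneg phi g ν' p.1 p.2)]
    _ = ⟪Q ν' |f|, |f|⟫ := (habs_eq ν' f).symm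
    _ ≤ a * ⟪Q ν₁ |f|, |f|⟫ + b * ⟪Q ν₂ |f|, |f|⟫ := by
        rw [habs_eq ν' f, habs_eq ν₁ f, habs_eq ν₂ f]
        have hmono : ∫ p : ℝ × ℝ, |f p.1| * |f p.2| * kernelK0 phi g ν' p.1 p.2 ∂((volume.restrict (Set.Ici (0 : ℝ))).prod (volume.restrict (Set.Ici (0 : ℝ))))
            ≤ ∫ p : ℝ × ℝ, (a * (|f p.1| * |f p.2| * kernelK0 phi g ν₁ p.1 p.2)
              + b * (|f p.1| * |f p.2| * kernelK0 phi g ν₂ p.1 p.2)) ∂((volume.restrict (Set.Ici (0 : ℝ))).prod (volume.restrict (Set.Ici (0 : ℝ)))) := by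
          refine integral_mono_ae (hintabs ν')
            (((hintabs ν₁).const_mul a).add ((hintabs ν₂).const_mul b)) ?_
          filter_upwards [hae2] with p hp
          have hconv := SAW.kernelK0_convex phi g (ν₁ := ν₁) (ν₂ := ν₂) p.1 p.2 ha hb hab
          calc |f p.1| * |f p.2| * kernelK0 phi g ν' p.1 p.2
              ≤ |f p.1| * |f p.2| * (a * kernelK0 phi g ν₁ p.1 p.2
                + b * kernelK0 phi g ν₂ p.1 p.2) :=
                mul_le_mul_of_nonneg_left hconv (by positivity)
            _ = a * (|f p.1| * |f p.2| * kernelK0 phi g ν₁ p.1 p.2)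
                + b * (|f p.1| * |f p.2| * kernelK0 phi g ν₂ p.1 p.2) := by ring
        refine hmono.trans (le_of_eq ?_)
        rw [integral_add ((hintabs ν₁).const_mul a) ((hintabs ν₂).const_mul b),
          integral_const_mul, integral_const_mul]
    _ ≤ a * ‖Q ν₁‖ + b * ‖Q ν₂‖ :=
        add_le_add (mul_le_mul_of_nonneg_left (hkey ν₁) ha)
          (mul_le_mul_of_nonneg_left (hkey ν₂) hb)
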